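/- Let G ⊆ ℂ^m and D ⊆ ℂ^n be domains such that G is an analytic retract of D (i.e., there exist holomorphic maps θ : G → D and ι : D → G with ι ∘ θ = id_G). If there is no holomorphic map F : G × G → G satisfying F(z,z) = z and F(z,w) = F(w,z) for all z,w ∈ G, then D is not biholomorphic to any convex domain. -/

import Mathlib

open Set

/-- If `G ⊆ ℂ^m` is an analytic retract of a domain `D ⊆ ℂ^n` and there is no holomorphic
map `F : G × G → G` with `F(z,z) = z` and `F(z,w) = F(w,z)`, then `D` is not biholomorphic
to any convex domain. -/
theorem not_biholomorphic_to_convex_of_retract_no_symmetric_mean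
    (m n : ℕ) (G : Set (Fin m → ℂ)) (D : Set (Fin n → ℂ))
    (hGopen : IsOpen G) (hGconn : IsConnected G)
    (hDopen : IsOpen D) (hDconn : IsConnected D)
    (θ : (Fin m → ℂ) → (Fin n → ℂ)) (ι : (Fin n → ℂ) → (Fin m → ℂ))
    (hθ : DifferentiableOn ℂ θ G) (hθmaps : MapsTo θ G D)
    (hι : DifferentiableOn ℂ ι D) (hιmaps : MapsTo ι D G)
    (hretract : ∀ x ∈ G, ι (θ x) = x)
    (hnoF : ¬ ∃ F : (Fin m → ℂ) × (Fin m → ℂ) → (Fin m → ℂ),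
      DifferentiableOn ℂ F (G ×ˢ G) ∧ MapsTo F (G ×ˢ G) G ∧
      (∀ z ∈ G, F (z, z) = z) ∧
      (∀ z ∈ G, ∀ w ∈ G, F (z, w) = F (w, z))) :
    ¬ ∃ (Ω : Set (Fin n → ℂ)) (f : (Fin n → ℂ) → (Fin n → ℂ))
        (g : (Fin n → ℂ) → (Fin n → ℂ)),
      IsOpen Ω ∧ Convex ℝ Ω ∧
      DifferentiableOn ℂ f D ∧ MapsTo f D Ω ∧
      DifferentiableOn ℂ g Ω ∧ MapsTo g Ω D ∧
      (∀ x ∈ D, g (f x) = x) ∧ (∀ y ∈ Ω, f (g y) = y) := by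
  rintro ⟨Ω, f, g, hΩopen, hΩconv, hf, hfmaps, hg, hgmaps, hgf, hfg⟩
  apply hnoF
  -- key fact: complex 1/2 smul equals real 1/2 smul
  have key : ∀ x : Fin n → ℂ, (1/2 : ℂ) • x = (1/2 : ℝ) • x := by
    intro x
    funext i
    simp [Pi.smul_apply, Complex.real_smul]
  set h : (Fin m → ℂ) × (Fin m → ℂ) → (Fin n → ℂ) :=
    fun p => (1/2 : ℂ) • f (θ p.1) + (1/2 : ℂ) • f (θ p.2) with hh
  have hmid : ∀ a ∈ Ω, ∀ b ∈ Ω, (1/2 : ℂ) • a + (1/2 : ℂ) • b ∈ Ω := by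
    intro a ha b hb
    rw [key, key]
    exact hΩconv ha hb (by norm_num) (by norm_num) (by norm_num)
  have hhmaps : MapsTo h (G ×ˢ G) Ω := by
    rintro ⟨z, w⟩ ⟨hz, hw⟩
    exact hmid _ (hfmaps (hθmaps hz)) _ (hfmaps (hθmaps hw))
  have hfst : DifferentiableOn ℂ (fun p : (Fin m → ℂ) × (Fin m → ℂ) => f (θ p.1))
      (G ×ˢ G) := by
    apply (hf.comp hθ hθmaps).comp differentiableOn_fst
    rintro ⟨z, w⟩ ⟨hz, hw⟩; exact hz
  have hsnd : DifferentiableOn ℂ (fun p : (Fin m → ℂ) × (Fin m → ℂ) => f (θ p.2))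
      (G ×ˢ G) := by
    apply (hf.comp hθ hθmaps).comp differentiableOn_snd
    rintro ⟨z, w⟩ ⟨hz, hw⟩; exact hw
  have hhdiff : DifferentiableOn ℂ h (G ×ˢ G) :=
    (hfst.const_smul (1/2 : ℂ)).add (hsnd.const_smul (1/2 : ℂ))
  refine ⟨fun p => ι (g (h p)), ?_, ?_, ?_, ?_⟩
  · exact (hι.comp (hg.comp hhdiff hhmaps) (hgmaps.comp hhmaps))
  · exact (hιmaps.comp hgmaps).comp hhmaps
  · intro z hz
    have hzΩ : f (θ z) ∈ Ω := hfmaps (hθmaps hz)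
    have : h (z, z) = f (θ z) := by
      simp only [hh]
      rw [← add_smul]
      norm_num
    show ι (g (h (z, z))) = z
    rw [this, hgf _ (hθmaps hz), hretract _ hz]
  · intro z hz w hw
    have : h (z, w) = h (w, z) := by simp only [hh]; ring
    show ι (g (h (z, w))) = ι (g (h (w, z)))
    rw [this]
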